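/- Let G be a finite graph, M a module of G, and X a minimal forbidden set of G with |X| > 4. Then either X ⊆ M, or |M ∩ X| ≤ 1. -/

import Mathlib

/-- A graph is an interval graph if each vertex can be assigned a (nonempty) closed real
interval such that two distinct vertices are adjacent iff their intervals intersect. -/
def IsIntervalGraph {V : Type*} (G : SimpleGraph V) : Prop :=
  ∃ f : V → Set ℝ,
    (∀ v, ∃ a b : ℝ, a ≤ b ∧ f v = Set.Icc a b) ∧
    ∀ u v : V, u ≠ v → (G.Adj u v ↔ (f u ∩ f v).Nonempty)

/-- A hole is an induced (chordless) cycle on at least 4 vertices, identified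
with its vertex set. -/
def IsHole {V : Type*} (G : SimpleGraph V) (H : Set V) : Prop :=
  ∃ m : ℕ, 4 ≤ m ∧ ∃ f : ZMod m → V,
    Function.Injective f ∧ Set.range f = H ∧
      ∀ i j : ZMod m, G.Adj (f i) (f j) ↔ (j = i + 1 ∨ i = j + 1)

/-- A minimal forbidden set: the induced subgraph is not interval, but every
proper subset induces an interval graph. -/
def IsMinimalForbidden {V : Type*} (G : SimpleGraph V) (X : Set V) : Prop :=
  ¬ IsIntervalGraph (G.induce X) ∧ ∀ Y : Set V, Y ⊂ X → IsIntervalGraph (G.induce Y)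

/-- A graph is prereduced if it has no minimal forbidden set of at most 10 vertices. -/
def Prereduced {V : Type*} (G : SimpleGraph V) : Prop :=
  ∀ X : Set V, X.ncard ≤ 10 → ¬ IsMinimalForbidden G X

/-- A module: any two vertices of `M` have exactly the same neighbors outside `M`. -/
def IsGraphModule {V : Type*} (G : SimpleGraph V) (M : Set V) : Prop :=
  ∀ u ∈ M, ∀ v ∈ M, ∀ x ∉ M, (G.Adj u x ↔ G.Adj v x)

/-- A graph is reduced if it is prereduced and every nontrivial module induces a clique. -/
def Reduced {V : Type*} [Fintype V] (G : SimpleGraph V) : Prop :=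
  Prereduced G ∧
    ∀ M : Set V, IsGraphModule G M → 1 < M.ncard → M.ncard < Fintype.card V →
      G.IsClique M

/-- Closed neighborhood `N[v]`. -/
def closedNbhd {V : Type*} (G : SimpleGraph V) (v : V) : Set V :=
  insert v (G.neighborSet v)

/-- Closed neighborhood of a set, `N[U] = ⋃ v ∈ U, N[v]`. -/
def closedNbhdSet {V : Type*} (G : SimpleGraph V) (U : Set V) : Set V :=
  ⋃ v ∈ U, closedNbhd G v

/-- The set of common neighbors of a vertex set `X`. -/
def commonNbrs {V : Type*} (G : SimpleGraph V) (X : Set V) : Set V :=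
  {v | ∀ x ∈ X, G.Adj v x}

/-- `P` induces a chordless path: it can be enumerated so that adjacency holds
exactly between consecutive vertices. -/
def IsInducedPath {V : Type*} (G : SimpleGraph V) (P : Set V) : Prop :=
  ∃ n : ℕ, ∃ f : Fin (n + 1) → V, Function.Injective f ∧ Set.range f = P ∧
    ∀ i j : Fin (n + 1), G.Adj (f i) (f j) ↔ (i.val + 1 = j.val ∨ j.val + 1 = i.val)

/-- A shallow terminal: a vertex `s` contained in a minimal forbidden set `W` that is
not a hole, such that `W \ N[s]` induces a chordless path. -/
def ShallowTerminal {V : Type*} (G : SimpleGraph V) (s : V) : Prop :=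
  ∃ W : Set V, IsMinimalForbidden G W ∧ s ∈ W ∧ ¬ IsHole G W ∧
    IsInducedPath G (W \ closedNbhd G s)

/-- A hole cover: a vertex set intersecting every hole. -/
def HoleCover {V : Type*} (G : SimpleGraph V) (C : Set V) : Prop :=
  ∀ H : Set V, IsHole G H → (C ∩ H).Nonempty

/-- A minimal hole cover: a hole cover no proper subset of which is a hole cover. -/
def MinimalHoleCover {V : Type*} (G : SimpleGraph V) (C : Set V) : Prop :=
  HoleCover G C ∧ ∀ C' : Set V, C' ⊂ C → ¬ HoleCover G C'

/-- An interval deletion set: a vertex set whose removal leaves an interval graph. -/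
def IntervalDeletionSet {V : Type*} (G : SimpleGraph V) (Q : Set V) : Prop :=
  IsIntervalGraph (G.induce Qᶜ)

/-- A minimum interval deletion set. -/
def MinIntervalDeletionSet {V : Type*} (G : SimpleGraph V) (Q : Set V) : Prop :=
  IntervalDeletionSet G Q ∧
    ∀ Q' : Set V, IntervalDeletionSet G Q' → Q.ncard ≤ Q'.ncard

/-- Two holes are congenial if each is contained in the closed neighborhood of the other. -/
def Congenial {V : Type*} (G : SimpleGraph V) (H₁ H₂ : Set V) : Prop :=
  H₁ ⊆ closedNbhdSet G H₂ ∧ H₂ ⊆ closedNbhdSet G H₁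

/-- The graph `G − S`: edges of `G` with both endpoints outside `S`
(vertices of `S` become isolated). -/
def deleteSet {V : Type*} (G : SimpleGraph V) (S : Set V) : SimpleGraph V where
  Adj u v := G.Adj u v ∧ u ∉ S ∧ v ∉ S
  symm := ⟨fun u v h => ⟨h.1.symm, h.2.2, h.2.1⟩⟩
  loopless := ⟨fun v h => h.1.ne rfl⟩

/-- A representation of `G` on the vertex set `Y` by endpoint functions. -/
def HasRep {V : Type*} (G : SimpleGraph V) (Y : Set V) : Prop :=
  ∃ a b : V → ℝ, (∀ v ∈ Y, a v ≤ b v) ∧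
    ∀ u ∈ Y, ∀ v ∈ Y, u ≠ v →
      (G.Adj u v ↔ (Set.Icc (a u) (b u) ∩ Set.Icc (a v) (b v)).Nonempty)

lemma hasRep_iff {V : Type*} (G : SimpleGraph V) (Y : Set V) :
    IsIntervalGraph (G.induce Y) ↔ HasRep G Y := by
  constructor
  · rintro ⟨f, hf, hadj⟩
    choose a b hab hEq using hf
    classical
    refine ⟨fun v => if h : v ∈ Y then a ⟨v, h⟩ else 0,
            fun v => if h : v ∈ Y then b ⟨v, h⟩ else 0, ?_, ?_⟩
    · intro v hv; simp [hv, hab ⟨v, hv⟩]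
    · intro u hu v hv huv
      have h := hadj ⟨u, hu⟩ ⟨v, hv⟩ (by simpa [Subtype.ext_iff] using huv)
      simpa [SimpleGraph.comap, hu, hv, hEq ⟨u, hu⟩, hEq ⟨v, hv⟩] using h
  · rintro ⟨a, b, hab, hadj⟩
    refine ⟨fun v => Set.Icc (a v.1) (b v.1), fun v => ⟨a v.1, b v.1, hab v.1 v.2, rfl⟩, ?_⟩
    rintro ⟨u, hu⟩ ⟨v, hv⟩ huv
    have : u ≠ v := fun h => huv (Subtype.ext h)
    simpa [SimpleGraph.comap] using hadj u hu v hv this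
open Set

lemma iccN (a b c d : ℝ) :
    (Set.Icc a b ∩ Set.Icc c d).Nonempty ↔ a ≤ b ∧ c ≤ d ∧ a ≤ d ∧ c ≤ b := by
  rw [Set.Icc_inter_Icc, Set.nonempty_Icc]
  simp only [sup_le_iff, le_inf_iff]
  constructor <;> intro h <;> tauto

lemma helly {V : Type*} {S : Set V} (hfin : S.Finite) (hne : S.Nonempty) (a b : V → ℝ)
    (h : ∀ i ∈ S, ∀ j ∈ S, (Set.Icc (a i) (b i) ∩ Set.Icc (a j) (b j)).Nonempty) :
    ∃ p, ∀ i ∈ S, a i ≤ p ∧ p ≤ b i := by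
  obtain ⟨i0, hi0, hmax⟩ := hfin.toFinset.exists_max_image a (by simpa using hne)
  rw [Set.Finite.mem_toFinset] at hi0
  refine ⟨a i0, fun i hi => ⟨hmax _ (hfin.mem_toFinset.mpr hi), ?_⟩⟩
  exact ((iccN _ _ _ _).mp (h i0 hi0 i hi)).2.2.1

lemma exists_eps {V : Type*} {D : Set V} (hfin : D.Finite) (a b : V → ℝ) (p : ℝ)
    (h : ∀ i ∈ D, p ∉ Set.Icc (a i) (b i)) :
    ∃ ε : ℝ, 0 < ε ∧ ∀ i ∈ D, Set.Icc (a i) (b i) ∩ Set.Icc (p - ε) (p + ε) = ∅ := by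
  classical
  set g : V → ℝ := fun i => max (a i - p) (p - b i) with hg
  have hgpos : ∀ i ∈ D, 0 < g i := by
    intro i hi
    have hm := h i hi
    simp only [Set.mem_Icc, not_and_or, not_le] at hm
    rw [hg]; simp only [lt_max_iff]
    rcases hm with hm | hm
    · left; linarith
    · right; linarith
  have key : ∀ i ∈ D, ∀ ε : ℝ, ε < g i →
      Set.Icc (a i) (b i) ∩ Set.Icc (p - ε) (p + ε) = ∅ := by
    intro i hi ε hε
    rw [Set.eq_empty_iff_forall_notMem]
    rintro t ⟨⟨h1, h2⟩, h3, h4⟩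
    rw [hg] at hε; simp only [lt_max_iff] at hε
    rcases hε with hε | hε <;> linarith
  by_cases hne : D.Nonempty
  · obtain ⟨i0, hi0, hmin⟩ := hfin.toFinset.exists_min_image g (by simpa using hne)
    rw [Set.Finite.mem_toFinset] at hi0
    refine ⟨g i0 / 2, by have := hgpos i0 hi0; linarith, fun i hi => key i hi _ ?_⟩
    have h1 := hmin _ (hfin.mem_toFinset.mpr hi)
    have h2 := hgpos i0 hi0
    linarith
  · exact ⟨1, one_pos, fun i hi => (hne ⟨i, hi⟩).elim⟩

lemma icc_union {a b c d p : ℝ} (h1 : p ∈ Set.Icc a b) (h2 : p ∈ Set.Icc c d) :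
    Set.Icc a b ∪ Set.Icc c d = Set.Icc (min a c) (max b d) := by
  simp only [Set.mem_Icc] at h1 h2
  ext t
  simp only [Set.mem_union, Set.mem_Icc, le_max_iff, min_le_iff]
  constructor
  · rintro (⟨h3, h4⟩ | ⟨h3, h4⟩)
    · exact ⟨Or.inl h3, Or.inl h4⟩
    · exact ⟨Or.inr h3, Or.inr h4⟩
  · rintro ⟨h3, h4⟩
    rcases le_total t p with htp | htp
    · rcases h3 with h3 | h3
      · exact Or.inl ⟨h3, le_trans htp h1.2⟩
      · exact Or.inr ⟨h3, le_trans htp h2.2⟩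
    · rcases h4 with h4 | h4
      · exact Or.inl ⟨le_trans h1.1 htp, h4⟩
      · exact Or.inr ⟨le_trans h2.1 htp, h4⟩

lemma c4_contra {V : Type*} (G : SimpleGraph V) {Y : Set V} (h : HasRep G Y)
    {u v x y : V} (hu : u ∈ Y) (hv : v ∈ Y) (hx : x ∈ Y) (hy : y ∈ Y)
    (huv : u ≠ v) (hxy : x ≠ y)
    (a1 : G.Adj u x) (a2 : G.Adj u y) (a3 : G.Adj v x) (a4 : G.Adj v y)
    (n1 : ¬ G.Adj u v) (n2 : ¬ G.Adj x y) : False := by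
  obtain ⟨a, b, hab, hadj⟩ := h
  have e1 := (iccN _ _ _ _).mp ((hadj u hu x hx (G.ne_of_adj a1)).mp a1)
  have e2 := (iccN _ _ _ _).mp ((hadj u hu y hy (G.ne_of_adj a2)).mp a2)
  have e3 := (iccN _ _ _ _).mp ((hadj v hv x hx (G.ne_of_adj a3)).mp a3)
  have e4 := (iccN _ _ _ _).mp ((hadj v hv y hy (G.ne_of_adj a4)).mp a4)
  have n1' : ¬ (a u ≤ b u ∧ a v ≤ b v ∧ a u ≤ b v ∧ a v ≤ b u) := by
    rw [← iccN]; rw [← hadj u hu v hv huv]; exact n1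
  apply n2
  rw [hadj x hx y hy hxy, iccN]
  have hu' := hab u hu; have hv' := hab v hv
  have hd : b v < a u ∨ b u < a v := by
    by_contra hc
    push_neg at hc
    exact n1' ⟨hu', hv', hc.1, hc.2⟩
  obtain ⟨h11, h12, h13, h14⟩ := e1
  obtain ⟨h21, h22, h23, h24⟩ := e2
  obtain ⟨h31, h32, h33, h34⟩ := e3
  obtain ⟨h41, h42, h43, h44⟩ := e4
  rcases hd with hd | hd
  · exact ⟨h12, h22, by linarith, by linarith⟩
  · exact ⟨h12, h22, by linarith, by linarith⟩

lemma clique_case {V : Type*} (G : SimpleGraph V) {M X : Set V}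
    (hM : IsGraphModule G M) (hX : IsMinimalForbidden G X)
    {u v : V} (hu : u ∈ M ∩ X) (hv : v ∈ M ∩ X) (huv : u ≠ v)
    (hcl : ∀ x ∈ M ∩ X, ∀ y ∈ M ∩ X, x ≠ y → G.Adj x y) : False := by
  classical
  set A := M ∩ X with hA
  set Y := X \ (A \ {u}) with hY
  have hYss : Y ⊂ X := by
    rw [Set.ssubset_iff_of_subset Set.diff_subset]
    exact ⟨v, hv.2, fun hvY => hvY.2 ⟨hv, huv ∘ Eq.symm⟩⟩
  have huY : u ∈ Y := ⟨hu.2, fun h => h.2 rfl⟩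
  obtain ⟨a, b, hab, hadj⟩ := (hasRep_iff G Y).mp (hX.2 Y hYss)
  apply hX.1
  rw [hasRep_iff]
  refine ⟨fun z => if z ∈ A then a u else a z, fun z => if z ∈ A then b u else b z, ?_, ?_⟩
  · intro z hz
    by_cases hzA : z ∈ A
    · simp only [hzA, if_pos]; exact hab u huY
    · simp only [hzA, if_neg, if_false]
      exact hab z ⟨hz, fun h => hzA h.1⟩
  · intro z hz z' hz' hne
    have hmod : ∀ w ∈ A, ∀ x ∈ X, x ∉ A → (G.Adj w x ↔ G.Adj u x) := by
      intro w hw x hxX hxA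
      rcases eq_or_ne w u with rfl | hwu
      · rfl
      · exact hM w hw.1 u hu.1 x (fun hxM => hxA ⟨hxM, hxX⟩)
    by_cases hzA : z ∈ A <;> by_cases hz'A : z' ∈ A
    · simp only [hzA, hz'A, if_pos]
      rw [Set.inter_self, Set.nonempty_Icc]
      exact iff_of_true (hcl z hzA z' hz'A hne) (hab u huY)
    · simp only [hzA, hz'A, if_pos, if_neg, if_false]
      have hz'Y : z' ∈ Y := ⟨hz', fun h => hz'A h.1⟩
      rw [hmod z hzA z' hz' hz'A]
      exact hadj u huY z' hz'Y (fun h => hz'A (h ▸ hu))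
    · simp only [hzA, hz'A, if_pos, if_neg, if_false]
      have hzY : z ∈ Y := ⟨hz, fun h => hzA h.1⟩
      rw [G.adj_comm, hmod z' hz'A z hz hzA, Set.inter_comm]
      exact hadj u huY z hzY (fun h => hzA (h ▸ hu))
    · simp only [hzA, hz'A, if_neg, if_false]
      exact hadj z ⟨hz, fun h => hzA h.1⟩ z' ⟨hz', fun h => hz'A h.1⟩ hne

lemma nonedge_case {V : Type*} [Fintype V] (G : SimpleGraph V) {M X : Set V}
    (hM : IsGraphModule G M) (hX : IsMinimalForbidden G X) (hcard : 4 < X.ncard)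
    {u v : V} (hu : u ∈ M ∩ X) (hv : v ∈ M ∩ X) (huv : u ≠ v) (hnadj : ¬ G.Adj u v)
    (hnsub : ¬ X ⊆ M) : False := by
  classical
  set A := M ∩ X with hA
  obtain ⟨w, hwX, hwM⟩ := Set.not_subset.mp hnsub
  have hAss : A ⊂ X := ⟨Set.inter_subset_right, fun h => hwM (h hwX).1⟩
  obtain ⟨c, d, hcd, hadjA⟩ := (hasRep_iff G A).mp (hX.2 A hAss)
  set Y := X \ (A \ {u}) with hYdef
  have hYss : Y ⊂ X := by
    rw [Set.ssubset_iff_of_subset Set.diff_subset]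
    exact ⟨v, hv.2, fun hvY => hvY.2 ⟨hv, huv ∘ Eq.symm⟩⟩
  have huY : u ∈ Y := ⟨hu.2, fun h => h.2 rfl⟩
  have hXAY : ∀ x, x ∈ X → x ∉ A → x ∈ Y := fun x hx hxA => ⟨hx, fun h => hxA h.1⟩
  obtain ⟨a, b, hab, hadjY⟩ := (hasRep_iff G Y).mp (hX.2 Y hYss)
  have hmod : ∀ z ∈ A, ∀ x ∈ X, x ∉ A → (G.Adj z x ↔ G.Adj u x) := by
    intro z hz x hxX hxA
    rcases eq_or_ne z u with rfl | hzu
    · rfl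
    · exact hM z hz.1 u hu.1 x (fun hxM => hxA ⟨hxM, hxX⟩)
  set B := {x | x ∈ X ∧ x ∉ A ∧ G.Adj u x} with hB
  -- B is a clique (else we get a C4, a proper induced subgraph that is not interval)
  have hBcl : ∀ x ∈ B, ∀ y ∈ B, x ≠ y → G.Adj x y := by
    intro x hx y hy hxy
    by_contra hnxy
    have hsub : ({u, v, x, y} : Set V) ⊆ X := by
      simp only [Set.insert_subset_iff, Set.singleton_subset_iff]
      exact ⟨hu.2, hv.2, hx.1, hy.1⟩
    have hS : ({u, v, x, y} : Set V) ⊂ X := by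
      refine hsub.ssubset_of_ne ?_
      intro hEq
      have hle : ({u, v, x, y} : Set V).ncard ≤ 4 := by
        have h1 := Set.ncard_insert_le u ({v, x, y} : Set V)
        have h2 := Set.ncard_insert_le v ({x, y} : Set V)
        have h3 := Set.ncard_insert_le x ({y} : Set V)
        have h4 : ({y} : Set V).ncard = 1 := Set.ncard_singleton y
        omega
      rw [hEq] at hle; omega
    refine c4_contra G ((hasRep_iff G _).mp (hX.2 _ hS))
      (by simp) (by simp) (by simp) (by simp) huv hxy
      hx.2.2 hy.2.2
      ((hmod v hv x hx.1 hx.2.1).mpr hx.2.2)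
      ((hmod v hv y hy.1 hy.2.1).mpr hy.2.2)
      hnadj hnxy
  -- Helly point p for the family {u} ∪ B
  set S : Set V := insert u B with hSdef
  have hSY : S ⊆ Y := by
    intro t ht
    rcases ht with rfl | ht
    · exact huY
    · exact hXAY t ht.1 ht.2.1
  have hSint : ∀ i ∈ S, ∀ j ∈ S,
      (Set.Icc (a i) (b i) ∩ Set.Icc (a j) (b j)).Nonempty := by
    intro i hi j hj
    rcases eq_or_ne i j with rfl | hij
    · rw [Set.inter_self, Set.nonempty_Icc]; exact hab i (hSY hi)
    · have hadj_ij : G.Adj i j := by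
        rcases hi with rfl | hiB <;> rcases hj with rfl | hjB
        · exact absurd rfl hij
        · exact hjB.2.2
        · exact hiB.2.2.symm
        · exact hBcl i hiB j hjB hij
      exact (hadjY i (hSY hi) j (hSY hj) hij).mp hadj_ij
  obtain ⟨p, hp⟩ := helly (Set.toFinite S) ⟨u, Set.mem_insert u B⟩ a b hSint
  -- the gap ε
  set D := {x | x ∈ X ∧ x ∉ A ∧ x ∉ B} with hD
  have hDp : ∀ i ∈ D, p ∉ Set.Icc (a i) (b i) := by
    intro i hi hmem
    apply hi.2.2
    refine ⟨hi.1, hi.2.1, ?_⟩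
    have hui : u ≠ i := fun h => hi.2.1 (h ▸ hu)
    rw [hadjY u huY i (hXAY i hi.1 hi.2.1) hui]
    exact ⟨p, Set.mem_Icc.mpr (hp u (Set.mem_insert u B)), hmem⟩
  obtain ⟨ε, hε, hεdisj⟩ := exists_eps (Set.toFinite D) a b p hDp
  -- bounds L < R for the representation of A
  have hAfin : A.Finite := Set.toFinite A
  have hAne : A.Nonempty := ⟨u, hu⟩
  obtain ⟨z0, hz0, hz0min⟩ := hAfin.toFinset.exists_min_image c ((Set.Finite.toFinset_nonempty hAfin).mpr hAne)
  obtain ⟨z1, hz1, hz1max⟩ := hAfin.toFinset.exists_max_image d ((Set.Finite.toFinset_nonempty hAfin).mpr hAne)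
  rw [Set.Finite.mem_toFinset] at hz0 hz1
  set L := c z0 with hL
  set R := d z1 with hR
  have hLle : ∀ z ∈ A, L ≤ c z := fun z hz => hz0min z (hAfin.mem_toFinset.mpr hz)
  have hRle : ∀ z ∈ A, d z ≤ R := fun z hz => hz1max z (hAfin.mem_toFinset.mpr hz)
  have hLR : L < R := by
    by_contra hc
    push_neg at hc
    apply hnadj
    rw [hadjA u hu v hv huv, iccN]
    have g1 := hcd u hu; have g2 := hcd v hv
    have g3 := hLle u hu; have g4 := hRle u hu
    have g5 := hLle v hv; have g6 := hRle v hv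
    exact ⟨g1, g2, by linarith, by linarith⟩
  -- affine squeezing map
  set k := 2 * ε / (R - L) with hk
  have hRL : (0:ℝ) < R - L := sub_pos.mpr hLR
  have hkpos : 0 < k := by rw [hk]; positivity
  set φ : ℝ → ℝ := fun t => p - ε + (t - L) * k with hφ
  have hφmono : ∀ x y : ℝ, φ x ≤ φ y ↔ x ≤ y := by
    intro x y
    rw [hφ]
    simp only []
    constructor <;> intro h <;> nlinarith
  have hφR : φ R = p + ε := by
    rw [hφ]
    simp only []
    rw [hk, mul_div_assoc']
    rw [mul_comm (R - L) (2 * ε), mul_div_assoc, div_self (ne_of_gt hRL)]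
    ring
  have hφmem : ∀ z ∈ A, p - ε ≤ φ (c z) ∧ φ (d z) ≤ p + ε := by
    intro z hz
    constructor
    · have h1 : L ≤ c z := hLle z hz
      have h2 : 0 ≤ (c z - L) * k := mul_nonneg (by linarith) hkpos.le
      rw [hφ]; simp only []; linarith
    · calc φ (d z) ≤ φ R := (hφmono _ _).mpr (hRle z hz)
        _ = p + ε := hφR
  have hwin : ∀ z ∈ A, ∀ t, t ∈ Set.Icc (φ (c z)) (φ (d z)) → t ∈ Set.Icc (p - ε) (p + ε) := by
    intro z hz t ht
    obtain ⟨m1, m2⟩ := hφmem z hz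
    exact ⟨le_trans m1 ht.1, le_trans ht.2 m2⟩
  have hpw : p ∈ Set.Icc (p - ε) (p + ε) := ⟨by linarith, by linarith⟩
  -- final representation of X
  apply hX.1
  rw [hasRep_iff]
  refine ⟨fun z => if z ∈ A then φ (c z) else if z ∈ B then min (a z) (p - ε) else a z,
          fun z => if z ∈ A then φ (d z) else if z ∈ B then max (b z) (p + ε) else b z, ?_, ?_⟩
  · intro z hz
    by_cases h1 : z ∈ A
    · simp only [if_pos h1]; exact (hφmono _ _).mpr (hcd z h1)
    · by_cases h2 : z ∈ B
      · simp only [if_neg h1, if_pos h2]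
        exact le_trans (min_le_left _ _) (le_trans (hab z (hXAY z hz h1)) (le_max_left _ _))
      · simp only [if_neg h1, if_neg h2]
        exact hab z (hXAY z hz h1)
  · -- the three mixed-type facts
    have hABf : ∀ z ∈ A, ∀ z' ∈ B, G.Adj z z' ∧
        (Set.Icc (φ (c z)) (φ (d z)) ∩
          Set.Icc (min (a z') (p - ε)) (max (b z') (p + ε))).Nonempty := by
      intro z hz z' hz'
      refine ⟨(hmod z hz z' hz'.1 hz'.2.1).mpr hz'.2.2, ⟨φ (c z), ?_, ?_⟩⟩
      · exact ⟨le_rfl, (hφmono _ _).mpr (hcd z hz)⟩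
      · obtain ⟨m1, m2⟩ := hφmem z hz
        have m3 : φ (c z) ≤ p + ε := le_trans ((hφmono _ _).mpr (hcd z hz)) m2
        exact ⟨le_trans (min_le_right _ _) m1, le_trans m3 (le_max_right _ _)⟩
    have hADf : ∀ z ∈ A, ∀ z' ∈ X, z' ∉ A → z' ∉ B → ¬ G.Adj z z' ∧
        ¬ (Set.Icc (φ (c z)) (φ (d z)) ∩ Set.Icc (a z') (b z')).Nonempty := by
      intro z hz z' hz'X h1 h2
      constructor
      · rw [hmod z hz z' hz'X h1]
        exact fun hadj => h2 ⟨hz'X, h1, hadj⟩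
      · rintro ⟨t, ht1, ht2⟩
        have hd : Set.Icc (a z') (b z') ∩ Set.Icc (p - ε) (p + ε) = ∅ :=
          hεdisj z' ⟨hz'X, h1, h2⟩
        have : t ∈ (∅ : Set ℝ) := hd ▸ Set.mem_inter ht2 (hwin z hz t ht1)
        exact this
    have hBDf : ∀ z ∈ B, ∀ z' ∈ X, z' ∉ A → z' ∉ B → z ≠ z' →
        (G.Adj z z' ↔ (Set.Icc (min (a z) (p - ε)) (max (b z) (p + ε)) ∩
          Set.Icc (a z') (b z')).Nonempty) := by
      intro z hz z' hz'X h1 h2 hne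
      rw [hadjY z (hXAY z hz.1 hz.2.1) z' (hXAY z' hz'X h1) hne]
      have hpz : p ∈ Set.Icc (a z) (b z) :=
        Set.mem_Icc.mpr (hp z (Set.mem_insert_of_mem u hz))
      have hun : Set.Icc (min (a z) (p - ε)) (max (b z) (p + ε)) =
          Set.Icc (a z) (b z) ∪ Set.Icc (p - ε) (p + ε) := (icc_union hpz hpw).symm
      rw [hun, Set.union_inter_distrib_right]
      have h0 : Set.Icc (p - ε) (p + ε) ∩ Set.Icc (a z') (b z') = ∅ := by
        rw [Set.inter_comm]; exact hεdisj z' ⟨hz'X, h1, h2⟩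
      rw [h0, Set.union_empty]
    intro z hz z' hz' hne
    by_cases h1 : z ∈ A <;> by_cases h2 : z' ∈ A
    · simp only [if_pos h1, if_pos h2]
      rw [hadjA z h1 z' h2 hne, iccN, iccN]
      simp only [hφmono]
    · by_cases h3 : z' ∈ B
      · simp only [if_pos h1, if_neg h2, if_pos h3]
        obtain ⟨q1, q2⟩ := hABf z h1 z' h3
        exact iff_of_true q1 q2
      · simp only [if_pos h1, if_neg h2, if_neg h3]
        obtain ⟨q1, q2⟩ := hADf z h1 z' hz' h2 h3
        exact iff_of_false q1 q2
    · by_cases h3 : z ∈ B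
      · simp only [if_neg h1, if_pos h2, if_pos h3]
        obtain ⟨q1, q2⟩ := hABf z' h2 z h3
        rw [G.adj_comm, Set.inter_comm]
        exact iff_of_true q1 q2
      · simp only [if_neg h1, if_pos h2, if_neg h3]
        obtain ⟨q1, q2⟩ := hADf z' h2 z hz h1 h3
        rw [G.adj_comm, Set.inter_comm]
        exact iff_of_false q1 q2
    · by_cases h3 : z ∈ B <;> by_cases h4 : z' ∈ B
      · simp only [if_neg h1, if_neg h2, if_pos h3, if_pos h4]
        refine iff_of_true (hBcl z h3 z' h4 hne) ⟨p, ?_, ?_⟩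
        · have hpz : p ∈ Set.Icc (a z) (b z) :=
            Set.mem_Icc.mpr (hp z (Set.mem_insert_of_mem u h3))
          exact ⟨le_trans (min_le_left _ _) hpz.1, le_trans hpz.2 (le_max_left _ _)⟩
        · have hpz : p ∈ Set.Icc (a z') (b z') :=
            Set.mem_Icc.mpr (hp z' (Set.mem_insert_of_mem u h4))
          exact ⟨le_trans (min_le_left _ _) hpz.1, le_trans hpz.2 (le_max_left _ _)⟩
      · simp only [if_neg h1, if_neg h2, if_pos h3, if_neg h4]
        exact hBDf z h3 z' hz' h2 h4 hne
      · simp only [if_neg h1, if_neg h2, if_pos h4, if_neg h3]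
        rw [G.adj_comm, Set.inter_comm]
        exact hBDf z' h4 z hz h1 h3 (Ne.symm hne)
      · simp only [if_neg h1, if_neg h2, if_neg h3, if_neg h4]
        exact hadjY z (hXAY z hz h1) z' (hXAY z' hz' h2) hne

/-- A minimal forbidden set of more than 4 vertices is either contained in
a module or meets it in at most one vertex. -/
theorem stmt_5 {V : Type*} [Fintype V] (G : SimpleGraph V)
    (M : Set V) (hM : IsGraphModule G M)
    (X : Set V) (hX : IsMinimalForbidden G X) (hcard : 4 < X.ncard) :
    X ⊆ M ∨ (M ∩ X).ncard ≤ 1 := by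
  classical
  by_cases hsub : X ⊆ M
  · exact Or.inl hsub
  · right
    by_contra hge
    push_neg at hge
    obtain ⟨u, v, hu, hv, huv⟩ := (Set.one_lt_ncard_iff (Set.toFinite _)).mp hge
    by_cases hcl : ∀ x ∈ M ∩ X, ∀ y ∈ M ∩ X, x ≠ y → G.Adj x y
    · exact (clique_case G hM hX hu hv huv hcl).elim
    · push_neg at hcl
      obtain ⟨x, hx, y, hy, hxy, hnxy⟩ := hcl
      exact (nonedge_case G hM hX hcard hx hy hxy hnxy hsub).elim
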